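/- Let E be a group containing a central element g of infinite order such that ⟨g⟩ has finite index in E. Then the set of torsion elements of E forms a finite subgroup of E. -/

import Mathlib

private lemma zpowers_torsion_eq_one {E : Type*} [Group E] {g : E}
    (hg : ¬ IsOfFinOrder g) {y : E} (hy : y ∈ Subgroup.zpowers g)
    (hty : IsOfFinOrder y) : y = 1 := by
  obtain ⟨m, rfl⟩ := hy
  have inj : Function.Injective fun n : ℤ => g ^ n :=
    injective_zpow_iff_not_isOfFinOrder.mpr hg
  obtain ⟨k, hk, hk1⟩ := hty.exists_pow_eq_one
  have h0 : g ^ (m * (k : ℤ)) = g ^ (0 : ℤ) := by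
    rw [zpow_mul, zpow_natCast, zpow_zero]
    exact hk1
  have hmk : m * (k : ℤ) = 0 := inj h0
  have hm : m = 0 := by
    rcases mul_eq_zero.mp hmk with h | h
    · exact h
    · exact absurd h (by exact_mod_cast hk.ne')
  simp [hm]

/-- If `E` contains a central infinite-order element `g` with `⟨g⟩` of finite
index, then the torsion elements of `E` form a finite subgroup. -/
theorem torsion_finite_subgroup {E : Type*} [Group E] (g : E)
    (hg : ¬ IsOfFinOrder g) (hcentral : ∀ x : E, g * x = x * g)
    (hfi : (Subgroup.zpowers g).FiniteIndex) :
    ∃ T : Subgroup E, (T : Set E) = {x : E | IsOfFinOrder x} ∧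
      (T : Set E).Finite := by
  haveI := hfi
  set H := Subgroup.zpowers g with hH
  have hn0 : H.index ≠ 0 := hfi.index_ne_zero
  -- every element of H is central
  have hcen : ∀ y ∈ H, ∀ x : E, y * x = x * y := by
    rintro y ⟨m, rfl⟩ x
    have hc : Commute g x := hcentral x
    exact (hc.zpow_left m).eq
  have key : ∀ (x : E) (k : ℕ) (g₀ : E), g₀⁻¹ * x ^ k * g₀ ∈ H →
      g₀⁻¹ * x ^ k * g₀ = x ^ k := by
    intro x k g₀ hmem
    have hc := hcen _ hmem g₀
    have h2 : g₀ * (g₀⁻¹ * x ^ k * g₀) * g₀⁻¹ = x ^ k := by group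
    calc g₀⁻¹ * x ^ k * g₀ = g₀ * (g₀⁻¹ * x ^ k * g₀) * g₀⁻¹ := by
          rw [← hc]; group
      _ = x ^ k := h2
  -- the transfer homomorphism
  letI : CommGroup H := { H.toGroup with mul_comm := fun a b => Subtype.ext (hcen _ a.2 _) }
  let τ : E →* H := MonoidHom.transfer (MonoidHom.id H)
  have hτ : ∀ x : E, (τ x : E) = x ^ H.index := by
    intro x
    rw [MonoidHom.transfer_eq_pow (MonoidHom.id H) x (key x)]
    rfl
  have ker_pow : ∀ z ∈ τ.ker, z ^ H.index = 1 := by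
    intro z hz
    have := congrArg (Subtype.val) (MonoidHom.mem_ker.mp hz)
    rw [hτ z] at this
    simpa using this
  have ker_tor : ∀ z ∈ τ.ker, IsOfFinOrder z := fun z hz =>
    isOfFinOrder_iff_pow_eq_one.mpr ⟨H.index, Nat.pos_of_ne_zero hn0, ker_pow z hz⟩
  refine ⟨τ.ker, ?_, ?_⟩
  · ext x
    simp only [SetLike.mem_coe, Set.mem_setOf_eq]
    constructor
    · exact ker_tor x
    · intro hx
      have hmem : x ^ H.index ∈ H := by rw [← hτ x]; exact (τ x).2
      have hone : x ^ H.index = 1 := zpowers_torsion_eq_one hg hmem hx.pow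
      rw [MonoidHom.mem_ker]
      ext
      rw [hτ x, hone]
      rfl
  · haveI : Finite (E ⧸ H) := H.finite_quotient_of_finiteIndex
    have hinj : Function.Injective (fun t : τ.ker => (QuotientGroup.mk t.1 : E ⧸ H)) := by
      rintro ⟨x, hx⟩ ⟨y, hy⟩ hxy
      simp only at hxy
      rw [QuotientGroup.eq] at hxy
      have hmem : x⁻¹ * y ∈ τ.ker := τ.ker.mul_mem (τ.ker.inv_mem hx) hy
      have h1 : x⁻¹ * y = 1 := zpowers_torsion_eq_one hg hxy (ker_tor _ hmem)
      have : x = y := by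
        have := congrArg (x * ·) h1
        simpa [mul_assoc] using this.symm
      exact Subtype.ext this
    haveI : Finite τ.ker := Finite.of_injective _ hinj
    exact Set.toFinite _
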